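/- Let X be a compact metric space and f_{0,∞} an equicontinuous sequence of continuous self-maps. Then for every n ≥ 1, the supremum topological sequence entropy of the n-th compositions system equals that of the original system: h*(f_{0,∞}^n) = h*(f_{0,∞}). -/

import Mathlib

open Filter Set MeasureTheory

/-- `nacomp f i n = f (i+n-1) ∘ ⋯ ∘ f i`, the `n`-fold composition of the
nonautonomous system starting at index `i`. -/
def nacomp {X : Type*} (f : ℕ → X → X) (i : ℕ) : ℕ → X → X
  | 0 => id
  | n + 1 => f (i + n) ∘ nacomp f i n

/-- `E` is an `(n, ε, A)`-separated subset of `Λ` for the nonautonomous system `f`. -/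
def IsSepSet {X : Type*} [PseudoMetricSpace X] (f : ℕ → X → X) (A : ℕ → ℕ) (n : ℕ)
    (ε : ℝ) (Λ : Set X) (E : Finset X) : Prop :=
  ↑E ⊆ Λ ∧ ∀ x ∈ E, ∀ y ∈ E, x ≠ y →
    ∃ j : Fin n, ε < dist (nacomp f 0 (A j) x) (nacomp f 0 (A j) y)

/-- `s_n(ε, A, f, Λ)`: maximal cardinality of an `(n,ε,A)`-separated subset of `Λ`. -/
noncomputable def maxSep {X : Type*} [PseudoMetricSpace X] (f : ℕ → X → X) (A : ℕ → ℕ)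
    (n : ℕ) (ε : ℝ) (Λ : Set X) : ℕ :=
  sSup {m | ∃ E : Finset X, IsSepSet f A n ε Λ E ∧ E.card = m}

/-- Topological sequence entropy of `f` on `Λ` along `A`, via separated sets:
`lim_{ε → 0} limsup_n (1/n) log s_n(ε,A,f,Λ)`, the limit realized as a supremum over `ε > 0`. -/
noncomputable def sepEnt {X : Type*} [PseudoMetricSpace X] (f : ℕ → X → X) (A : ℕ → ℕ)
    (Λ : Set X) : EReal :=
  ⨆ ε : {ε : ℝ // 0 < ε},
    limsup (fun n : ℕ => ((Real.log (maxSep f A n ε Λ) / n : ℝ) : EReal)) atTop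

/-- A finite open cover of the whole space. -/
def IsFinOpenCover {X : Type*} [TopologicalSpace X] (𝒜 : Finset (Set X)) : Prop :=
  (∀ u ∈ 𝒜, IsOpen u) ∧ ⋃₀ ↑𝒜 = (univ : Set X)

/-- A cell `⋂_j (f_0^{a_j})⁻¹ (u j)` of the join `⋁_{j} f_0^{-a_j} 𝒜`. -/
def seqCell {X : Type*} (f : ℕ → X → X) (A : ℕ → ℕ) (n : ℕ) (u : Fin n → Set X) : Set X :=
  ⋂ j : Fin n, nacomp f 0 (A j.1) ⁻¹' (u j)

/-- `N((⋁_{j=1}^n f_0^{-a_j} 𝒜)|_Λ)`: the minimal cardinality of a subfamily of the join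
cover whose union contains `Λ`. -/
noncomputable def coverN {X : Type*} (f : ℕ → X → X) (A : ℕ → ℕ) (n : ℕ) (Λ : Set X)
    (𝒜 : Finset (Set X)) : ℕ :=
  sInf {m | ∃ S : Finset (Fin n → Set X), (∀ u ∈ S, ∀ j, u j ∈ 𝒜) ∧
    (Λ ⊆ ⋃ u ∈ S, seqCell f A n u) ∧ S.card = m}

/-- `h_A(f, Λ, 𝒜)`, the sequence entropy of `f` on `Λ` relative to the open cover `𝒜`. -/
noncomputable def coverEntOf {X : Type*} (f : ℕ → X → X) (A : ℕ → ℕ) (Λ : Set X)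
    (𝒜 : Finset (Set X)) : EReal :=
  limsup (fun n : ℕ => ((Real.log (coverN f A n Λ 𝒜) / n : ℝ) : EReal)) atTop

/-- `h_A(f, Λ)`: topological sequence entropy via open covers. -/
noncomputable def coverEnt {X : Type*} [TopologicalSpace X] (f : ℕ → X → X) (A : ℕ → ℕ)
    (Λ : Set X) : EReal :=
  ⨆ 𝒜 : {𝒜 : Finset (Set X) // IsFinOpenCover 𝒜}, coverEntOf f A Λ 𝒜

/-- The supremum topological sequence entropy `h*(f) = sup_A h_A(f)`. -/
noncomputable def supSeqEnt {X : Type*} [PseudoMetricSpace X] (f : ℕ → X → X) : EReal :=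
  ⨆ A : {A : ℕ → ℕ // StrictMono A}, sepEnt f A univ

/-- The `n`-th compositions system `f_{0,∞}^n`, whose `k`-th map is `f_{kn}^n`. -/
def compSys {X : Type*} (f : ℕ → X → X) (n : ℕ) : ℕ → X → X :=
  fun k => nacomp f (k * n) n

/-- A finite measurable partition of the space. -/
def IsFinMeasPartition {X : Type*} [MeasurableSpace X] (P : Finset (Set X)) : Prop :=
  (∀ s ∈ P, MeasurableSet s) ∧ ((P : Set (Set X)).PairwiseDisjoint id) ∧
    ⋃₀ ↑P = (univ : Set X)

/-- `h_{A,μ}(f, P) = limsup (1/n) H_μ(⋁_{j=1}^n f_0^{-a_j} P)`. -/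
noncomputable def measSeqEntPart {X : Type*} [MeasurableSpace X] (μ : Measure X)
    (f : ℕ → X → X) (A : ℕ → ℕ) (P : Finset (Set X)) : EReal :=
  limsup (fun n : ℕ =>
    (((∑ u : Fin n → {s // s ∈ P},
        Real.negMulLog (μ (seqCell f A n (fun j => (u j : Set X)))).toReal) / n : ℝ) : EReal))
    atTop

/-- The measure-theoretic sequence entropy `h_{A,μ}(f)`. -/
noncomputable def measSeqEnt {X : Type*} [MeasurableSpace X] (μ : Measure X)
    (f : ℕ → X → X) (A : ℕ → ℕ) : EReal :=
  ⨆ P : {P : Finset (Set X) // IsFinMeasPartition P}, measSeqEntPart μ f A P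

/-- Covering dimension at most `d`: every finite open cover has a finite open refinement
of order at most `d + 1`. -/
def HasCovDimLE (X : Type*) [TopologicalSpace X] (d : ℕ) : Prop :=
  ∀ 𝒜 : Finset (Set X), IsFinOpenCover 𝒜 → ∃ ℬ : Finset (Set X), IsFinOpenCover ℬ ∧
    (∀ v ∈ ℬ, ∃ u ∈ 𝒜, v ⊆ u) ∧ ∀ x : X, ({v : Set X | v ∈ ℬ ∧ x ∈ v}).ncard ≤ d + 1

/-- The induced nonautonomous system `f̂` on the space of Borel probability measures,
carrying the Lévy–Prokhorov (Prohorov) metric: `f̂ n μ = (f n)_* μ`. -/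
noncomputable def inducedSys {X : Type*} [MeasurableSpace X] (f : ℕ → X → X)
    (hf : ∀ n, Measurable (f n)) :
    ℕ → LevyProkhorov (ProbabilityMeasure X) → LevyProkhorov (ProbabilityMeasure X) :=
  fun n μ => (LevyProkhorov.toMeasureEquiv (α := ProbabilityMeasure X)).symm
    (((LevyProkhorov.toMeasureEquiv (α := ProbabilityMeasure X)) μ).map (hf n).aemeasurable)

/-- Multi-sensitivity of a nonautonomous system. -/
def MultiSensitive {X : Type*} [PseudoMetricSpace X] (f : ℕ → X → X) : Prop :=
  ∃ δ : ℝ, 0 < δ ∧ ∀ (k : ℕ) (V : Fin k → Set X),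
    (∀ i, IsOpen (V i)) → (∀ i, (V i).Nonempty) →
      ∃ n : ℕ, 1 ≤ n ∧ ∀ i, δ < Metric.diam (nacomp f 0 n '' V i)

theorem nacomp_add' {X : Type*} (f : ℕ → X → X) (i a b : ℕ) :
    nacomp f i (a + b) = nacomp f (i + a) b ∘ nacomp f i a := by
  induction b with
  | zero => rfl
  | succ b ih =>
    show f (i + (a + b)) ∘ nacomp f i (a + b) = (f (i + a + b) ∘ nacomp f (i + a) b) ∘ nacomp f i a
    rw [ih, Nat.add_assoc]
    rfl

theorem nacomp_succ_left' {X : Type*} (f : ℕ → X → X) (i b : ℕ) :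
    nacomp f i (b + 1) = nacomp f (i + 1) b ∘ f i := by
  rw [Nat.add_comm b 1, nacomp_add' f i 1 b]
  have : nacomp f i 1 = f i := by
    show f (i + 0) ∘ id = f i
    simp
  rw [this]

theorem nacomp_compSys' {X : Type*} (f : ℕ → X → X) (n k : ℕ) :
    nacomp (compSys f n) 0 k = nacomp f 0 (k * n) := by
  induction k with
  | zero => simp [nacomp]
  | succ k ih =>
    show compSys f n (0 + k) ∘ nacomp (compSys f n) 0 k = _
    rw [ih, Nat.succ_mul, nacomp_add' f 0 (k * n) n, Nat.zero_add, Nat.zero_add]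
    rfl

theorem equi_claim' {X : Type*} [MetricSpace X] [CompactSpace X] (f : ℕ → X → X)
    (hequi : Equicontinuous f) (n : ℕ) :
    ∀ ε : ℝ, 0 < ε → ∃ δ : ℝ, 0 < δ ∧ ∀ p r, r ≤ n → ∀ x y : X,
      dist x y < δ → dist (nacomp f p r x) (nacomp f p r y) < ε := by
  have hue : UniformEquicontinuous f :=
    CompactSpace.uniformEquicontinuous_of_equicontinuous hequi
  rw [Metric.uniformEquicontinuous_iff] at hue
  induction n with
  | zero =>
    intro ε hε
    refine ⟨ε, hε, ?_⟩
    intro p r hr x y h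
    interval_cases r
    simpa [nacomp] using h
  | succ n ih =>
    intro ε hε
    obtain ⟨δ₁, hδ₁, H₁⟩ := ih ε hε
    obtain ⟨δ₂, hδ₂, H₂⟩ := hue δ₁ hδ₁
    refine ⟨min δ₁ δ₂, lt_min hδ₁ hδ₂, ?_⟩
    intro p r hr x y hxy
    rcases Nat.lt_or_ge r (n + 1) with h | h
    · exact H₁ p r (Nat.lt_succ_iff.mp h) x y (hxy.trans_le (min_le_left _ _))
    · have hr' : r = n + 1 := le_antisymm hr h
      subst hr'
      rw [nacomp_succ_left']
      exact H₁ (p + 1) n le_rfl _ _ (H₂ x y (hxy.trans_le (min_le_right _ _)) p)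

theorem sep_card_bound {X : Type*} [MetricSpace X] [CompactSpace X] (g : ℕ → X → X)
    (A : ℕ → ℕ) (N : ℕ) {ε : ℝ} (hε : 0 < ε) :
    ∃ C : ℕ, ∀ E : Finset X, IsSepSet g A N ε univ E → E.card ≤ C := by
  obtain ⟨t, -, htfin, htcov⟩ :=
    finite_cover_balls_of_compact (isCompact_univ : IsCompact (univ : Set (Fin N → X)))
      (by positivity : (0:ℝ) < ε / 2)
  classical
  set Φ : X → (Fin N → X) := fun x j => nacomp g 0 (A j) x with hΦ
  have hmem : ∀ x : X, ∃ z ∈ t, Φ x ∈ Metric.ball z (ε / 2) := by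
    intro x
    have := htcov (mem_univ (Φ x))
    simpa using this
  choose c hct hcball using hmem
  refine ⟨htfin.toFinset.card, ?_⟩
  intro E hE
  refine Finset.card_le_card_of_injOn (fun x => c x) ?_ ?_
  · intro x _
    simpa using hct x
  · intro x hx y hy hcxy
    by_contra hne
    obtain ⟨j, hj⟩ := hE.2 x (by simpa using hx) y (by simpa using hy) hne
    have h1 : ε < dist (Φ x) (Φ y) := hj.trans_le (dist_le_pi_dist (Φ x) (Φ y) j)
    have h2 : dist (Φ x) (Φ y) < ε := by
      have ha := hcball x
      have hb := hcball y
      simp only [] at hcxy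
      rw [show c x = c y from hcxy] at ha
      rw [Metric.mem_ball] at ha hb
      calc dist (Φ x) (Φ y) ≤ dist (Φ x) (c y) + dist (c y) (Φ y) := dist_triangle _ _ _
        _ < ε / 2 + ε / 2 := by
            rw [dist_comm (c y) (Φ y)]
            exact add_lt_add ha hb
        _ = ε := by ring
    linarith

theorem bddAbove_sep {X : Type*} [MetricSpace X] [CompactSpace X] (g : ℕ → X → X)
    (A : ℕ → ℕ) (N : ℕ) {ε : ℝ} (hε : 0 < ε) :
    BddAbove {m | ∃ E : Finset X, IsSepSet g A N ε univ E ∧ E.card = m} := by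
  obtain ⟨C, hC⟩ := sep_card_bound g A N hε
  exact ⟨C, by rintro m ⟨E, hE, rfl⟩; exact hC E hE⟩

theorem card_le_maxSep {X : Type*} [MetricSpace X] [CompactSpace X] {g : ℕ → X → X}
    {A : ℕ → ℕ} {N : ℕ} {ε : ℝ} (hε : 0 < ε) {E : Finset X}
    (hE : IsSepSet g A N ε univ E) : E.card ≤ maxSep g A N ε univ :=
  le_csSup (bddAbove_sep g A N hε) ⟨E, hE, rfl⟩

theorem maxSep_spec {X : Type*} [MetricSpace X] [CompactSpace X] (g : ℕ → X → X)
    (A : ℕ → ℕ) (N : ℕ) {ε : ℝ} (hε : 0 < ε) :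
    ∃ E : Finset X, IsSepSet g A N ε univ E ∧ E.card = maxSep g A N ε univ := by
  have h0 : (0 : ℕ) ∈ {m | ∃ E : Finset X, IsSepSet g A N ε univ E ∧ E.card = m} :=
    ⟨∅, ⟨by simp, by simp⟩, by simp⟩
  exact Nat.sSup_mem ⟨0, h0⟩ (bddAbove_sep g A N hε)

theorem one_le_maxSep {X : Type*} [MetricSpace X] [CompactSpace X] [Nonempty X]
    (g : ℕ → X → X) (A : ℕ → ℕ) (N : ℕ) {ε : ℝ} (hε : 0 < ε) :
    1 ≤ maxSep g A N ε univ := by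
  obtain ⟨x⟩ := ‹Nonempty X›
  have : IsSepSet g A N ε univ {x} := by
    refine ⟨by simp, ?_⟩
    intro a ha b hb hab
    simp only [Finset.mem_singleton] at ha hb
    exact absurd (ha.trans hb.symm) hab
  simpa using card_le_maxSep hε this

theorem sepEnt_le_aux {X : Type*} [MetricSpace X] [CompactSpace X] [Nonempty X]
    (f : ℕ → X → X) (hequi : Equicontinuous f) {n : ℕ} (hn : 1 ≤ n)
    (A : ℕ → ℕ) (hA : StrictMono A) :
    sepEnt f A univ ≤ supSeqEnt (compSys f n) := by
  classical
  unfold sepEnt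
  apply iSup_le
  rintro ⟨ε, hε⟩
  show limsup (fun m : ℕ => ((Real.log (maxSep f A m ε univ) / m : ℝ) : EReal)) atTop ≤ _
  obtain ⟨δ, hδ, Hδ⟩ := equi_claim' f hequi n ε hε
  set p : ℕ → Prop := fun t => t ∈ Set.range (fun j => A j / n) with hp
  have hnpos : 0 < n := hn
  have hpinf : (setOf p).Infinite := by
    intro hfin
    obtain ⟨b, hb⟩ := hfin.bddAbove
    have hmem : A (n * (b + 1)) / n ∈ setOf p := ⟨n * (b + 1), rfl⟩
    have h1 : A (n * (b + 1)) / n ≤ b := hb hmem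
    have h2 : b + 1 ≤ A (n * (b + 1)) / n := by
      rw [Nat.le_div_iff_mul_le hnpos]
      calc (b + 1) * n = n * (b + 1) := Nat.mul_comm _ _
        _ ≤ A (n * (b + 1)) := hA.le_apply
    omega
  set A' : ℕ → ℕ := Nat.nth p with hA'def
  have hA' : StrictMono A' := Nat.nth_strictMono hpinf
  set c : ℕ → ℕ := fun m => Nat.count p (A (m - 1) / n + 1) with hc
  have hδ2 : 0 < δ / 2 := by positivity
  have hcle : ∀ m : ℕ, 1 ≤ m → c m ≤ m := by
    intro m hm
    rw [hc]
    dsimp only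
    rw [Nat.count_eq_card_filter_range]
    have hsurj : Set.SurjOn (fun j => A j / n) ↑(Finset.range m)
        ↑((Finset.range (A (m - 1) / n + 1)).filter p) := by
      rintro t ht
      simp only [Finset.coe_filter, Set.mem_setOf_eq, Finset.mem_range] at ht
      obtain ⟨htlt, j, hj⟩ := ht
      by_cases hjm : j < m
      · exact ⟨j, by simpa using hjm, hj⟩
      · have hj' : A j / n = t := hj
        have h1 : A (m - 1) / n ≤ A j / n := Nat.div_le_div_right (hA.monotone (by omega))
        refine ⟨m - 1, by simp; omega, ?_⟩
        show A (m - 1) / n = t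
        omega
    have := Finset.card_le_card_of_surjOn _ hsurj
    simpa using this
  have hkey : ∀ m : ℕ, 1 ≤ m → maxSep f A m ε univ ≤ maxSep (compSys f n) A' (c m) (δ / 2) univ := by
    intro m hm
    obtain ⟨E, hE, hEcard⟩ := maxSep_spec f A m hε
    rw [← hEcard]
    refine card_le_maxSep hδ2 ?_
    refine ⟨Set.subset_univ _, ?_⟩
    intro x hx y hy hxy
    obtain ⟨j, hj⟩ := hE.2 x hx y hy hxy
    have hdec : nacomp f 0 (A j) =
        (nacomp f (n * (A (j:ℕ) / n)) (A (j:ℕ) % n)) ∘ nacomp (compSys f n) 0 (A (j:ℕ) / n) := by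
      rw [nacomp_compSys', Nat.mul_comm (A (j:ℕ) / n) n]
      conv_lhs => rw [← Nat.div_add_mod (A (j:ℕ)) n]
      rw [nacomp_add' f 0 (n * (A (j:ℕ) / n)) (A (j:ℕ) % n), Nat.zero_add]
    have hsep : δ ≤ dist (nacomp (compSys f n) 0 (A (j:ℕ) / n) x)
        (nacomp (compSys f n) 0 (A (j:ℕ) / n) y) := by
      by_contra hlt
      push_neg at hlt
      have := Hδ (n * (A (j:ℕ) / n)) (A (j:ℕ) % n) (le_of_lt (Nat.mod_lt _ hnpos)) _ _ hlt
      rw [hdec] at hj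
      simp only [Function.comp_apply] at hj
      linarith
    have hpj : p (A (j:ℕ) / n) := ⟨j, rfl⟩
    have hk : Nat.count p (A (j:ℕ) / n) < c m := by
      have h1 : A (j:ℕ) / n ≤ A (m - 1) / n :=
        Nat.div_le_div_right (hA.monotone (by omega))
      have h2 : Nat.count p (A (j:ℕ) / n) < Nat.count p (A (j:ℕ) / n + 1) := by
        rw [Nat.count_succ, if_pos hpj]; omega
      have h3 : Nat.count p (A (j:ℕ) / n + 1) ≤ Nat.count p (A (m - 1) / n + 1) :=
        Nat.count_monotone p (by omega)
      rw [hc]; dsimp only; omega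
    refine ⟨⟨Nat.count p (A (j:ℕ) / n), hk⟩, ?_⟩
    have hnth : A' (Nat.count p (A (j:ℕ) / n)) = A (j:ℕ) / n := Nat.nth_count hpj
    show δ / 2 < dist (nacomp (compSys f n) 0 (A' (Nat.count p (A (j:ℕ) / n))) x) _
    rw [hnth]
    linarith
  have hct : Tendsto c atTop atTop := by
    rw [tendsto_atTop_atTop]
    intro K
    refine ⟨n * (Nat.nth p K + 1) + 1, ?_⟩
    intro m hm
    have h2 : Nat.nth p K + 1 ≤ A (m - 1) / n := by
      rw [Nat.le_div_iff_mul_le hnpos]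
      calc (Nat.nth p K + 1) * n = n * (Nat.nth p K + 1) := Nat.mul_comm _ _
        _ ≤ m - 1 := by omega
        _ ≤ A (m - 1) := hA.le_apply
    have h3 : Nat.count p (Nat.nth p K + 1) ≤ c m := by
      rw [hc]; dsimp only
      exact Nat.count_monotone p (by omega)
    rw [Nat.count_nth_succ_of_infinite hpinf] at h3
    omega
  have hmono : ∀ᶠ m : ℕ in atTop,
      ((Real.log (maxSep f A m ε univ) / m : ℝ) : EReal) ≤
      ((Real.log (maxSep (compSys f n) A' (c m) (δ / 2) univ) / (c m) : ℝ) : EReal) := by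
    filter_upwards [eventually_ge_atTop 1] with m hm
    rw [EReal.coe_le_coe_iff]
    have hS1 : 1 ≤ maxSep f A m ε univ := one_le_maxSep f A m hε
    have hS2 := hkey m hm
    have hS1' : 1 ≤ maxSep (compSys f n) A' (c m) (δ / 2) univ := le_trans hS1 hS2
    have hc1 : 1 ≤ c m := by
      have hp0 : p (A 0 / n) := ⟨0, rfl⟩
      have h2 : Nat.count p (A 0 / n) < Nat.count p (A 0 / n + 1) := by
        rw [Nat.count_succ, if_pos hp0]; omega
      have hd : A 0 / n ≤ A (m - 1) / n := Nat.div_le_div_right (hA.monotone (Nat.zero_le _))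
      have h3 : Nat.count p (A 0 / n + 1) ≤ Nat.count p (A (m - 1) / n + 1) :=
        Nat.count_monotone p (by omega)
      rw [hc]; dsimp only; omega
    have hlog1 : Real.log (maxSep f A m ε univ) ≤
        Real.log (maxSep (compSys f n) A' (c m) (δ / 2) univ) := by
      have h0 : (0:ℝ) < (maxSep f A m ε univ : ℕ) := by exact_mod_cast hS1
      exact Real.log_le_log h0 (by exact_mod_cast hS2)
    have hnonneg : 0 ≤ Real.log (maxSep (compSys f n) A' (c m) (δ / 2) univ) :=
      Real.log_nonneg (by exact_mod_cast hS1')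
    have hcm : (c m : ℝ) ≤ (m : ℝ) := by exact_mod_cast hcle m hm
    have hc0 : (0:ℝ) < (c m : ℝ) := by exact_mod_cast hc1
    exact div_le_div₀ hnonneg hlog1 hc0 hcm
  refine le_trans (Filter.limsup_le_limsup hmono) ?_
  have heq : (fun m : ℕ =>
      ((Real.log (maxSep (compSys f n) A' (c m) (δ / 2) univ) / (c m) : ℝ) : EReal))
      = (fun k : ℕ => ((Real.log (maxSep (compSys f n) A' k (δ / 2) univ) / k : ℝ) : EReal)) ∘ c :=
    rfl
  rw [heq, Filter.limsup_comp]
  refine le_trans (Filter.limsup_le_limsup_of_le hct) ?_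
  show _ ≤ ⨆ B : {A : ℕ → ℕ // StrictMono A}, sepEnt (compSys f n) B univ
  refine le_iSup_of_le ⟨A', hA'⟩ ?_
  show _ ≤ ⨆ e : {ε : ℝ // 0 < ε},
    limsup (fun k : ℕ => ((Real.log (maxSep (compSys f n) A' k e univ) / k : ℝ) : EReal)) atTop
  exact le_iSup_of_le ⟨δ / 2, hδ2⟩ le_rfl


theorem supSeqEnt_compSys_le_aux {X : Type*} [MetricSpace X]
    (f : ℕ → X → X) {n : ℕ} (hn : 1 ≤ n) :
    supSeqEnt (compSys f n) ≤ supSeqEnt f := by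
  unfold supSeqEnt
  apply iSup_le
  rintro ⟨A, hA⟩
  have key : sepEnt (compSys f n) A univ = sepEnt f (fun j => A j * n) univ := by
    unfold sepEnt maxSep IsSepSet
    simp only [nacomp_compSys']
  rw [key]
  have hmono : StrictMono (fun j => A j * n) := fun a b h =>
    Nat.mul_lt_mul_of_lt_of_le (hA h) le_rfl (by omega)
  exact le_iSup (fun B : {A : ℕ → ℕ // StrictMono A} => sepEnt f B univ) ⟨_, hmono⟩

/-- For an equicontinuous nonautonomous system, the supremum topological sequence entropy
of the `n`-th compositions system equals that of the original system. -/
theorem supSeqEnt_compSys {X : Type*} [MetricSpace X] [CompactSpace X]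
    (f : ℕ → X → X) (hf : ∀ m, Continuous (f m)) (hequi : Equicontinuous f)
    (n : ℕ) (hn : 1 ≤ n) :
    supSeqEnt (compSys f n) = supSeqEnt f := by
  rcases isEmpty_or_nonempty X with hX | hX
  · have he : compSys f n = f := by
      funext k x
      exact isEmptyElim x
    rw [he]
  · refine le_antisymm (supSeqEnt_compSys_le_aux f hn) ?_
    unfold supSeqEnt
    apply iSup_le
    rintro ⟨A, hA⟩
    exact sepEnt_le_aux f hequi hn A hA
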